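/- For every ζ ∈ (π/3, π/2), d/dζ[sin ζ/ζ] > −4/π² and d/dζ[ψ₂(cos ζ)] < −√3/3, where ψ₂(z) = (2z² − 2z − 1)/(z − 2); consequently the equation sin ζ/ζ = ψ₂(cos ζ) has exactly one solution in (π/3, π/2). -/

import Mathlib

open Real Set

-- derivative of sin z / z
lemma hda_sin_div (ζ : ℝ) (hζ : ζ ≠ 0) :
    HasDerivAt (fun z : ℝ => Real.sin z / z) ((Real.cos ζ * ζ - Real.sin ζ) / ζ^2) ζ := by
  refine ((Real.hasDerivAt_sin ζ).div (hasDerivAt_id ζ) hζ).congr_deriv ?_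
  simp

-- derivative of ψ₂ ∘ cos (unfolded)
lemma hda_psi_cos (ζ : ℝ) :
    HasDerivAt (fun z : ℝ => (2*Real.cos z^2 - 2*Real.cos z - 1) / (Real.cos z - 2))
      (-Real.sin ζ * (2*Real.cos ζ^2 - 8*Real.cos ζ + 5) / (Real.cos ζ - 2)^2) ζ := by
  have hc : Real.cos ζ - 2 ≠ 0 := by nlinarith [Real.cos_le_one ζ]
  have u := Real.hasDerivAt_cos ζ
  have h1 : HasDerivAt (fun z : ℝ => 2*Real.cos z^2 - 2*Real.cos z - 1)
      (2*(2*Real.cos ζ*(-Real.sin ζ)) - 2*(-Real.sin ζ)) ζ := by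
    have hp : HasDerivAt (fun z : ℝ => Real.cos z ^ 2) (2*Real.cos ζ*(-Real.sin ζ)) ζ := by
      refine (u.pow 2).congr_deriv ?_
      norm_num
    exact ((hp.const_mul 2).sub (u.const_mul 2)).sub_const 1
  have h2 : HasDerivAt (fun z : ℝ => Real.cos z - 2) (-Real.sin ζ) ζ := u.sub_const 2
  have := h1.div h2 hc
  refine this.congr_deriv ?_
  ring

lemma sin_gt (ζ : ℝ) (hζ : ζ ∈ Ioo (π/3) (π/2)) : Real.sqrt 3 / 2 < Real.sin ζ := by
  have h := Real.strictMonoOn_sin (a := π/3) (b := ζ)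
    ⟨by linarith [pi_pos], by linarith [pi_pos]⟩
    ⟨by nlinarith [pi_pos, hζ.1], le_of_lt hζ.2⟩ hζ.1
  simpa [Real.sin_pi_div_three] using h

lemma cos_mem (ζ : ℝ) (hζ : ζ ∈ Ioo (π/3) (π/2)) : Real.cos ζ ∈ Ioo 0 (1/2 : ℝ) := by
  constructor
  · exact Real.cos_pos_of_mem_Ioo ⟨by linarith [pi_pos, hζ.1], hζ.2⟩
  · have h := Real.strictAntiOn_cos (a := π/3) (b := ζ)
      ⟨by positivity, by linarith [pi_pos]⟩
      ⟨by nlinarith [pi_pos, hζ.1], by linarith [pi_pos, hζ.2]⟩ hζ.1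
    simpa [Real.cos_pi_div_three] using h

lemma key_a (ζ : ℝ) (hζ : ζ ∈ Ioo (π/3) (π/2)) :
    π^2 * (Real.sin ζ - ζ * Real.cos ζ) < 4 * ζ^2 := by
  have hπ : (3.141592:ℝ) < π := pi_gt_d6
  have hs3 : (1.732:ℝ) < Real.sqrt 3 := by
    nlinarith [sq_sqrt (by norm_num : (0:ℝ) ≤ 3), Real.sqrt_nonneg 3]
  set g : ℝ → ℝ := fun z => 4*z^2/π^2 - Real.sin z + z * Real.cos z with hg
  have hd : ∀ z : ℝ, HasDerivAt g (z * (8/π^2 - Real.sin z)) z := by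
    intro z
    have h1 : HasDerivAt (fun z : ℝ => 4*z^2/π^2) (8*z/π^2) z := by
      have := ((hasDerivAt_pow 2 z).const_mul 4).div_const (π^2)
      simpa [pow_one] using this.congr_deriv (by ring)
    have h2 : HasDerivAt (fun z : ℝ => z * Real.cos z) (Real.cos z + z * (-Real.sin z)) z := by
      refine ((hasDerivAt_id z).mul (Real.hasDerivAt_cos z)).congr_deriv ?_
      simp
    have := (h1.sub (Real.hasDerivAt_sin z)).add h2
    refine this.congr_deriv ?_
    field_simp
    ring
  have hanti : StrictAntiOn g (Icc (π/3) (π/2)) := by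
    refine strictAntiOn_of_deriv_neg (convex_Icc _ _)
      (fun z _ => (hd z).differentiableAt.continuousAt.continuousWithinAt) ?_
    intro z hz
    rw [interior_Icc] at hz
    rw [(hd z).deriv]
    have hsz := sin_gt z hz
    have hzpos : 0 < z := by nlinarith [pi_pos, hz.1]
    have : 8/π^2 - Real.sin z < 0 := by
      have : (8:ℝ)/π^2 < Real.sqrt 3 / 2 := by
        rw [div_lt_div_iff₀ (by positivity) (by norm_num)]
        nlinarith
      linarith
    nlinarith
  have hmem : ζ ∈ Icc (π/3) (π/2) := ⟨le_of_lt hζ.1, le_of_lt hζ.2⟩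
  have hend : (π/2 : ℝ) ∈ Icc (π/3) (π/2) := ⟨by linarith [pi_pos], le_refl _⟩
  have := hanti hmem hend hζ.2
  have hgπ2 : g (π/2) = 0 := by
    simp [hg, Real.sin_pi_div_two, Real.cos_pi_div_two]
    field_simp
    ring
  rw [hgπ2] at this
  have hπ2 : (0:ℝ) < π^2 := by positivity
  have : 0 < 4*ζ^2/π^2 - Real.sin ζ + ζ * Real.cos ζ := this
  have h4 : 0 < 4*ζ^2 - π^2*Real.sin ζ + π^2*(ζ * Real.cos ζ) := by
    have := mul_pos hπ2 this
    calc (0:ℝ) < π^2 * (4*ζ^2/π^2 - Real.sin ζ + ζ * Real.cos ζ) := this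
    _ = 4*ζ^2 - π^2*Real.sin ζ + π^2*(ζ * Real.cos ζ) := by field_simp
  nlinarith

lemma part1a (ζ : ℝ) (hζ : ζ ∈ Ioo (π/3) (π/2)) :
    deriv (fun z : ℝ => Real.sin z / z) ζ > -4/π^2 := by
  have hζ0 : ζ ≠ 0 := by nlinarith [pi_pos, hζ.1]
  rw [(hda_sin_div ζ hζ0).deriv]
  have hk := key_a ζ hζ
  rw [gt_iff_lt, div_lt_div_iff₀ (by positivity) (by positivity : (0:ℝ) < ζ^2)]
  nlinarith

lemma part1b (ζ : ℝ) (hζ : ζ ∈ Ioo (π/3) (π/2)) :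
    -Real.sin ζ * (2*Real.cos ζ^2 - 8*Real.cos ζ + 5) / (Real.cos ζ - 2)^2
      < -Real.sqrt 3 / 3 := by
  have hs := sin_gt ζ hζ
  have hc := cos_mem ζ hζ
  set c := Real.cos ζ
  have hden : (0:ℝ) < (c - 2)^2 := by nlinarith [hc.2]
  rw [div_lt_div_iff₀ hden (by norm_num : (0:ℝ) < 3)]
  have hnum : 0 < 2*c^2 - 8*c + 5 := by nlinarith [hc.1, hc.2]
  have h1 : Real.sqrt 3 / 2 * (2*c^2 - 8*c + 5) < Real.sin ζ * (2*c^2 - 8*c + 5) :=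
    mul_lt_mul_of_pos_right hs hnum
  -- 3*(2c²-8c+5) - 2(c-2)² = 4c² -16c +7 = (2c-1)(2c-7) ≥ 0 for c ≤ 1/2
  have h2 : 2*(c-2)^2 ≤ 3*(2*c^2 - 8*c + 5) := by nlinarith [hc.1, hc.2]
  nlinarith [Real.sqrt_nonneg 3]

theorem first_critical_point
    (ψ₂ : ℝ → ℝ) (hψ₂ : ∀ z, ψ₂ z = (2*z^2 - 2*z - 1) / (z - 2)) :
    (∀ ζ ∈ Set.Ioo (π/3) (π/2),
      deriv (fun z : ℝ => Real.sin z / z) ζ > -4/π^2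
      ∧ deriv (fun z : ℝ => ψ₂ (Real.cos z)) ζ < -Real.sqrt 3 / 3)
    ∧ (∃! ζ : ℝ, ζ ∈ Set.Ioo (π/3) (π/2) ∧ Real.sin ζ / ζ = ψ₂ (Real.cos ζ)) := by
  have hπ : (3.141592:ℝ) < π := pi_gt_d6
  have hπ' : π < 3.141593 := pi_lt_d6
  have hs3 : (1.732:ℝ) < Real.sqrt 3 := by
    nlinarith [sq_sqrt (by norm_num : (0:ℝ) ≤ 3), Real.sqrt_nonneg 3]
  have hs3' : Real.sqrt 3 < 1.7321 := by
    nlinarith [sq_sqrt (by norm_num : (0:ℝ) ≤ 3), Real.sqrt_nonneg 3]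
  have hfun : (fun z : ℝ => ψ₂ (Real.cos z))
      = fun z => (2*Real.cos z^2 - 2*Real.cos z - 1) / (Real.cos z - 2) := by
    funext z; rw [hψ₂]
  constructor
  · intro ζ hζ
    refine ⟨part1a ζ hζ, ?_⟩
    rw [hfun, (hda_psi_cos ζ).deriv]
    exact part1b ζ hζ
  · -- existence and uniqueness
    set φ : ℝ → ℝ := fun z => Real.sin z / z
      - (2*Real.cos z^2 - 2*Real.cos z - 1) / (Real.cos z - 2) with hφ
    have hdφ : ∀ ζ ∈ Ioo (π/3) (π/2), HasDerivAt φ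
        ((Real.cos ζ * ζ - Real.sin ζ) / ζ^2
          - -Real.sin ζ * (2*Real.cos ζ^2 - 8*Real.cos ζ + 5) / (Real.cos ζ - 2)^2) ζ := by
      intro ζ hζ
      have hζ0 : ζ ≠ 0 := by nlinarith [pi_pos, hζ.1]
      exact (hda_sin_div ζ hζ0).sub (hda_psi_cos ζ)
    have hcont : ContinuousOn φ (Icc (π/3) (π/2)) := by
      apply ContinuousOn.sub
      · exact Real.continuous_sin.continuousOn.div continuousOn_id
          (fun x hx => by nlinarith [pi_pos, hx.1])
      · exact ContinuousOn.div (by fun_prop) (by fun_prop)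
          (fun x _ => by nlinarith [Real.cos_le_one x])
    have hmono : StrictMonoOn φ (Icc (π/3) (π/2)) := by
      refine strictMonoOn_of_deriv_pos (convex_Icc _ _) hcont ?_
      intro ζ hζ
      rw [interior_Icc] at hζ
      rw [(hdφ ζ hζ).deriv]
      have h1 := part1a ζ hζ
      rw [(hda_sin_div ζ (by nlinarith [pi_pos, hζ.1] : ζ ≠ 0)).deriv] at h1
      have h2 := part1b ζ hζ
      have : -4/π^2 + Real.sqrt 3 / 3 > 0 := by
        rw [div_add_div _ _ (by positivity) (by norm_num)]
        apply div_pos _ (by positivity)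
        nlinarith
      linarith
    have hmem3 : (π/3 : ℝ) ∈ Icc (π/3) (π/2) := ⟨le_refl _, by linarith [pi_pos]⟩
    have hmem2 : (π/2 : ℝ) ∈ Icc (π/3) (π/2) := ⟨by linarith [pi_pos], le_refl _⟩
    have hval3 : φ (π/3) < 0 := by
      rw [hφ]
      simp only [Real.sin_pi_div_three, Real.cos_pi_div_three]
      have hπpos := pi_pos
      have h1 : Real.sqrt 3 / 2 / (π/3) = 3 * Real.sqrt 3 / (2*π) := by
        field_simp
      rw [h1]
      have h2 : (2*(1/2:ℝ)^2 - 2*(1/2) - 1) / ((1/2:ℝ) - 2) = 1 := by norm_num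
      rw [h2]
      rw [sub_neg, div_lt_one (by positivity)]
      nlinarith
    have hval2 : 0 < φ (π/2) := by
      rw [hφ]
      simp only [Real.sin_pi_div_two, Real.cos_pi_div_two]
      have : (2*(0:ℝ)^2 - 2*0 - 1) / ((0:ℝ) - 2) = 1/2 := by norm_num
      rw [this]
      have hπpos := pi_pos
      rw [sub_pos, div_lt_div_iff₀ (by norm_num) (by positivity)]
      nlinarith
    obtain ⟨ζ, hζmem, hζval⟩ := intermediate_value_Ioo (by linarith [pi_pos] : π/3 ≤ π/2)
      hcont (show (0:ℝ) ∈ Ioo (φ (π/3)) (φ (π/2)) from ⟨hval3, hval2⟩)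
    refine ⟨ζ, ⟨hζmem, ?_⟩, ?_⟩
    · rw [hψ₂]
      have : φ ζ = 0 := hζval
      rw [hφ] at this
      linarith [sub_eq_zero.mp this]
    · rintro y ⟨hymem, hyval⟩
      have hyφ : φ y = 0 := by
        rw [hφ]; rw [hψ₂] at hyval; simp only [hyval]; ring
      have hζφ : φ ζ = 0 := hζval
      have hyI : y ∈ Icc (π/3) (π/2) := ⟨le_of_lt hymem.1, le_of_lt hymem.2⟩
      have hζI : ζ ∈ Icc (π/3) (π/2) := ⟨le_of_lt hζmem.1, le_of_lt hζmem.2⟩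
      rcases lt_trichotomy y ζ with h | h | h
      · have := hmono hyI hζI h; rw [hyφ, hζφ] at this; linarith
      · exact h
      · have := hmono hζI hyI h; rw [hyφ, hζφ] at this; linarith
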